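/- Suppose for each prime p we are given an integer a_p with |a_p| ≤ 2√p, and set C_p = p - a_p. Then the Euler product ∏_p (1 - a_p·p^{-s}/(p² - C_p)), taken over primes p with p² ≠ C_p, converges absolutely for every complex s with Re(s) > -1/2. Consequently, the global Igusa zeta function of a nonsingular plane curve, written as ζ(s+1)·∏_p (1 - a_p p^{-s}/(p²-C_p)), has a meromorphic continuation to the region Re(s) > -1/2. -/

import Mathlib

open Complex Real Filter Topology


lemma igusa_denom_lb {a : ℕ → ℤ} {p : ℕ} (hp : p.Prime)
    (ha : |(a p : ℝ)| ≤ 2 * Real.sqrt p) (hne : (p : ℤ) ^ 2 ≠ (p : ℤ) - a p) :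
    (p : ℝ) ^ 2 / 9 ≤ |(((p : ℤ) ^ 2 - ((p : ℤ) - a p) : ℤ) : ℝ)| := by
  set N : ℤ := (p : ℤ) ^ 2 - ((p : ℤ) - a p) with hN
  have hN0 : N ≠ 0 := sub_ne_zero.mpr hne
  have h1 : (1 : ℝ) ≤ |((N : ℤ) : ℝ)| := by
    rw [← Int.cast_abs]
    exact_mod_cast Int.one_le_abs hN0
  rcases le_or_gt 4 (p : ℝ) with hp4 | hp4
  · -- large p
    have hsq := Real.sq_sqrt (by positivity : (0:ℝ) ≤ (p:ℝ))
    have hsn := Real.sqrt_nonneg (p : ℝ)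
    have habs := abs_le.mp ha
    have hNr : ((N : ℤ) : ℝ) = (p:ℝ)^2 - (p:ℝ) + (a p : ℝ) := by
      push_cast [hN]; ring
    have hlow : (p:ℝ)^2 / 9 ≤ ((N : ℤ) : ℝ) := by
      rw [hNr]
      have ht2 : (2:ℝ) ≤ Real.sqrt p := by nlinarith
      nlinarith [habs.1, hsq, ht2, hp4, sq_nonneg (Real.sqrt p - 2), sq_nonneg ((p:ℝ) - 4)]
    exact hlow.trans (le_abs_self _)
  · -- small p : p ≤ 3
    have hple : (p : ℝ) ≤ 3 := by
      have := hp.two_le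
      have : p < 4 := by exact_mod_cast hp4
      interval_cases p <;> norm_num
    calc (p:ℝ)^2/9 ≤ 1 := by nlinarith [hp.two_le]
    _ ≤ _ := h1

lemma igusa_term_bound {a : ℕ → ℤ} {p : ℕ} (hp : p.Prime)
    (ha : |(a p : ℝ)| ≤ 2 * Real.sqrt p) (hne : (p : ℤ) ^ 2 ≠ (p : ℤ) - a p)
    {σ : ℝ} {s : ℂ} (hs : σ ≤ s.re) :
    ‖(a p : ℂ) * ((p : ℕ) : ℂ) ^ (-s) / (((p : ℕ) : ℂ) ^ 2 - (((p : ℕ) : ℤ) - a p : ℤ))‖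
      ≤ 18 * (p : ℝ) ^ (-(3/2 + σ)) := by
  have hp0 : (0:ℝ) < p := by exact_mod_cast hp.pos
  have hp1 : (1:ℝ) ≤ p := by exact_mod_cast hp.one_lt.le
  set N : ℤ := (p : ℤ) ^ 2 - ((p : ℤ) - a p) with hN
  have hden : ((p : ℕ) : ℂ) ^ 2 - ((((p : ℕ) : ℤ) - a p : ℤ) : ℂ) = ((N : ℤ) : ℂ) := by
    push_cast [hN]; ring
  rw [hden, norm_div, norm_mul]
  have h2 : ‖((p:ℕ) : ℂ) ^ (-s)‖ = (p:ℝ) ^ (-s.re) := by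
    rw [Complex.norm_natCast_cpow_of_pos hp.pos]; simp
  have h1 : ‖((a p : ℤ) : ℂ)‖ = |(a p : ℝ)| := by simp
  have h3 : ‖((N : ℤ) : ℂ)‖ = |((N:ℤ) : ℝ)| := by simp
  rw [h1, h2, h3]
  have hdb := igusa_denom_lb hp ha hne
  have hnum : |(a p : ℝ)| * (p:ℝ) ^ (-s.re) ≤ (2 * Real.sqrt p) * (p:ℝ) ^ (-σ) := by
    apply mul_le_mul ha (Real.rpow_le_rpow_of_exponent_le hp1 (by linarith)) (by positivity)
      (by positivity)
  calc |(a p : ℝ)| * (p:ℝ) ^ (-s.re) / |((N:ℤ) : ℝ)|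
      ≤ (2 * Real.sqrt p) * (p:ℝ) ^ (-σ) / ((p:ℝ)^2/9) :=
        div_le_div₀ (by positivity) hnum (by positivity) hdb
    _ = 18 * (p:ℝ) ^ (-(3/2 + σ)) := by
        rw [Real.sqrt_eq_rpow, show ((p:ℝ)^2) = (p:ℝ)^(2:ℝ) by
          rw [← Real.rpow_natCast (p:ℝ) 2]; norm_num]
        rw [show -(3/2+σ) = (1:ℝ)/2 + -σ + -(2:ℝ) by ring, Real.rpow_add hp0,
          Real.rpow_add hp0, Real.rpow_neg hp0.le (2:ℝ)]
        field_simp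
        ring


lemma zeta_shift_meromorphicAt (s₀ : ℂ) :
    MeromorphicAt (fun s : ℂ => riemannZeta (s + 1)) s₀ := by
  by_cases h0 : s₀ = 0
  · subst h0
    set g : ℂ → ℂ := Function.update (fun z : ℂ => z * riemannZeta (z + 1)) 0 1 with hg
    have hmap : Tendsto (fun z : ℂ => z + 1) (𝓝[≠] 0) (𝓝[≠] 1) := by
      rw [nhdsWithin, nhdsWithin]
      apply Filter.Tendsto.inf
      · simpa using (continuous_add_right (1:ℂ)).tendsto 0
      · exact tendsto_principal_principal.2 fun x hx => by
          simp only [Set.mem_compl_iff, Set.mem_singleton_iff] at *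
          intro h; exact hx (by linear_combination h)
    have htend : Tendsto (fun z : ℂ => z * riemannZeta (z + 1)) (𝓝[≠] 0) (𝓝 1) := by
      have h := riemannZeta_residue_one.comp hmap
      refine h.congr fun z => ?_
      simp [Function.comp]
    have hgeq : (fun z : ℂ => z * riemannZeta (z + 1)) =ᶠ[𝓝[≠] (0:ℂ)] g := by
      filter_upwards [self_mem_nhdsWithin] with z hz
      simp only [Set.mem_compl_iff, Set.mem_singleton_iff] at hz
      rw [hg, Function.update_of_ne hz]
    have hgc : ContinuousAt g 0 := by
      rw [← continuousWithinAt_compl_self]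
      have : Tendsto g (𝓝[≠] 0) (𝓝 1) := htend.congr' hgeq
      simpa [ContinuousWithinAt, hg, Function.update_self] using this
    have hgd : ∀ᶠ z in 𝓝[≠] (0:ℂ), DifferentiableAt ℂ g z := by
      filter_upwards [self_mem_nhdsWithin] with z hz
      simp only [Set.mem_compl_iff, Set.mem_singleton_iff] at hz
      have h1 : DifferentiableAt ℂ (fun z : ℂ => z * riemannZeta (z + 1)) z := by
        apply differentiableAt_fun_id.mul
        exact (differentiableAt_riemannZeta (by
          intro h; exact hz (by linear_combination h))).comp z
          (differentiableAt_fun_id.add_const 1)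
      refine h1.congr_of_eventuallyEq ?_
      filter_upwards [isOpen_compl_singleton.mem_nhds
        (by simpa [Set.mem_compl_iff] using hz : z ∈ ({0}ᶜ : Set ℂ))] with w hw
      simp only [Set.mem_compl_iff, Set.mem_singleton_iff] at hw
      rw [hg, Function.update_of_ne hw]
    have hga : AnalyticAt ℂ g 0 :=
      Complex.analyticAt_of_differentiable_on_punctured_nhds_of_continuousAt hgd hgc
    have hm : MeromorphicAt (g * (fun z : ℂ => z)⁻¹) 0 :=
      hga.meromorphicAt.mul (MeromorphicAt.id 0).inv
    apply hm.congr
    filter_upwards [self_mem_nhdsWithin] with z hz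
    simp only [Set.mem_compl_iff, Set.mem_singleton_iff] at hz
    rw [Pi.mul_apply, Pi.inv_apply, hg, Function.update_of_ne hz]
    field_simp
  · have hd : DifferentiableOn ℂ (fun s : ℂ => riemannZeta (s + 1)) ({0}ᶜ : Set ℂ) := by
      intro z hz
      simp only [Set.mem_compl_iff, Set.mem_singleton_iff] at hz
      exact ((differentiableAt_riemannZeta (by
        intro h; exact hz (by linear_combination h))).comp z
        (differentiableAt_fun_id.add_const 1)).differentiableWithinAt
    exact (hd.analyticAt (isOpen_compl_singleton.mem_nhds h0)).meromorphicAt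


lemma igusa_majorant_summable (a : ℕ → ℤ) {σ : ℝ} (hσ : -(1/2 : ℝ) < σ) :
    Summable (fun p : {p : ℕ // p.Prime ∧ ((p : ℤ) ^ 2 ≠ (p : ℤ) - a p)} =>
      18 * ((p : ℕ) : ℝ) ^ (-(3/2 + σ))) := by
  have h : Summable (fun n : ℕ => 18 * (n : ℝ) ^ (-(3/2 + σ))) :=
    (Real.summable_nat_rpow.2 (by linarith)).mul_left 18
  exact h.subtype {p : ℕ | p.Prime ∧ ((p : ℤ) ^ 2 ≠ (p : ℤ) - a p)}

set_option maxHeartbeats 1000000 in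
lemma igusa_prod_analyticAt (a : ℕ → ℤ)
    (ha : ∀ p : ℕ, p.Prime → |(a p : ℝ)| ≤ 2 * Real.sqrt p) {s₀ : ℂ}
    (hs₀ : -(1/2 : ℝ) < s₀.re) :
    AnalyticAt ℂ
      (fun s : ℂ => ∏' p : {p : ℕ // p.Prime ∧ ((p : ℤ) ^ 2 ≠ (p : ℤ) - a p)},
        (1 - (a (p : ℕ) : ℂ) * ((p : ℕ) : ℂ) ^ (-s) /
          (((p : ℕ) : ℂ) ^ 2 - (((p : ℕ) : ℤ) - a (p : ℕ) : ℤ)))) s₀ := by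
  classical
  set ι := {p : ℕ // p.Prime ∧ ((p : ℤ) ^ 2 ≠ (p : ℤ) - a p)} with hι
  set σ : ℝ := (s₀.re - 1/2) / 2 with hσdef
  have hσ1 : -(1/2 : ℝ) < σ := by rw [hσdef]; linarith
  have hσ2 : σ < s₀.re := by rw [hσdef]; linarith
  set r : ι → ℂ → ℂ := fun p s => (a (p : ℕ) : ℂ) * ((p : ℕ) : ℂ) ^ (-s) /
      (((p : ℕ) : ℂ) ^ 2 - (((p : ℕ) : ℤ) - a (p : ℕ) : ℤ)) with hr
  set F : ι → ℂ → ℂ := fun p s => 1 - r p s with hF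
  set u : ι → ℝ := fun p => 18 * ((p : ℕ) : ℝ) ^ (-(3/2 + σ)) with hu_def
  set V : Set ℂ := {s : ℂ | σ < s.re} with hV_def
  have hV : IsOpen V := isOpen_lt continuous_const Complex.continuous_re
  have hs₀V : s₀ ∈ V := hσ2
  have hbound : ∀ p : ι, ∀ s ∈ V, ‖r p s‖ ≤ u p := fun p s hs =>
    igusa_term_bound p.2.1 (ha _ p.2.1) p.2.2 (le_of_lt hs)
  have hu : Summable u := igusa_majorant_summable a hσ1
  -- each r p is entire
  have hrd : ∀ p : ι, Differentiable ℂ (r p) := by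
    intro p
    have hpne : ((p : ℕ) : ℂ) ≠ 0 := Nat.cast_ne_zero.2 p.2.1.pos.ne'
    exact ((differentiable_const _).mul
      ((differentiable_id.neg).const_cpow (Or.inl hpne))).div_const _
  have hFd : ∀ p : ι, Differentiable ℂ (F p) := fun p =>
    (differentiable_const 1).sub (hrd p)
  -- the bad set is finite
  set B : Set ι := {p : ι | ¬ (u p ≤ 1/2)} with hB_def
  have hBfin : B.Finite := by
    have htend : Tendsto (fun n : ℕ => 18 * (n : ℝ) ^ (-(3/2 + σ))) atTop (𝓝 0) := by
      have h1 := (tendsto_rpow_neg_atTop (show (0:ℝ) < 3/2 + σ by linarith)).comp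
        tendsto_natCast_atTop_atTop (α := ℕ)
      simpa using h1.const_mul (18 : ℝ)
    have hev := htend.eventually (gt_mem_nhds (by norm_num : (0:ℝ) < 1/2))
    rw [eventually_atTop] at hev
    obtain ⟨M, hM⟩ := hev
    apply Set.Finite.subset ((Set.finite_Iio M).preimage
      (Set.injOn_of_injective Subtype.val_injective))
    intro p hp
    simp only [hB_def, Set.mem_setOf_eq] at hp
    simp only [Set.mem_preimage, Set.mem_Iio]
    by_contra h
    push_neg at h
    exact hp (le_of_lt (hM _ h))
  have hgood : ∀ p : ι, p ∈ Bᶜ → u p ≤ 1/2 := fun p hp => not_not.mp hp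
  -- properties of good factors
  have hrle : ∀ (p : ι), p ∈ Bᶜ → ∀ s ∈ V, ‖r p s‖ ≤ 1/2 := fun p hp s hs =>
    (hbound p s hs).trans (hgood p hp)
  have hfne : ∀ (p : ι), p ∈ Bᶜ → ∀ s ∈ V, F p s ≠ 0 := by
    intro p hp s hs h
    have h2 := hrle p hp s hs
    rw [← sub_eq_zero.mp h] at h2
    norm_num at h2
  have hslit : ∀ (p : ι), p ∈ Bᶜ → ∀ s ∈ V, F p s ∈ Complex.slitPlane := by
    intro p hp s hs
    rw [Complex.mem_slitPlane_iff]
    left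
    have h1 : (r p s).re ≤ ‖r p s‖ := Complex.re_le_norm _
    have h2 := hrle p hp s hs
    simp only [hF, sub_re, one_re]
    linarith
  have hlog : ∀ (p : ι), p ∈ Bᶜ → ∀ s ∈ V, ‖Complex.log (F p s)‖ ≤ 3/2 * u p := by
    intro p hp s hs
    have h := Complex.norm_log_one_add_half_le_self (z := -(r p s))
      (by simpa using hrle p hp s hs)
    rw [show (1 : ℂ) + -(r p s) = F p s by rw [hF]; ring] at h
    simp only [norm_neg] at h
    exact h.trans (by have := hbound p s hs; linarith)
  -- the log-sum is differentiable on V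
  set L : ℂ → ℂ := fun s => ∑' p : ↥Bᶜ, Complex.log (F (p : ι) s) with hL_def
  have hLd : DifferentiableOn ℂ L V := by
    apply differentiableOn_tsum_of_summable_norm
      ((hu.mul_left (3/2)).subtype Bᶜ)
      (fun p => fun s hs => (((hFd p).differentiableAt).clog
        (hslit p p.2 s hs)).differentiableWithinAt)
      hV
      (fun p s hs => hlog p p.2 s hs)
  -- product over good primes as exp of L
  have hFprod : ∀ s ∈ V, HasProd (fun p : ↥Bᶜ => F (p : ι) s) (Complex.exp (L s)) := by
    intro s hs
    have hsum : Summable fun p : ↥Bᶜ => Complex.log (F (p : ι) s) :=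
      Summable.of_norm_bounded ((hu.mul_left (3/2)).subtype Bᶜ)
        (fun p => hlog p p.2 s hs)
    have h1 := hsum.hasSum.cexp
    have h2 : (Complex.exp ∘ fun p : ↥Bᶜ => Complex.log (F (p : ι) s))
        = fun p : ↥Bᶜ => F (p : ι) s := by
      funext p
      simp only [Function.comp_apply]
      exact Complex.exp_log (hfne p p.2 s hs)
    rw [h2] at h1
    exact h1
  -- splitting the product
  have hsplit : ∀ s ∈ V, (∏' p : ι, F p s)
      = (∏' p : ↥B, F (p : ι) s) * Complex.exp (L s) := by
    intro s hs
    rw [← (hFprod s hs).tprod_eq]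
    exact (Multipliable.tprod_mul_tprod_compl (f := fun p : ι => F p s) (s := B)
      (hBfin.multipliable _) ⟨_, hFprod s hs⟩).symm
  -- conclude differentiability
  haveI : Fintype ↥B := hBfin.fintype
  have h1 : DifferentiableOn ℂ (fun s => ∏' p : ↥B, F (p : ι) s) V := by
    have heq : (fun s : ℂ => ∏' p : ↥B, F (p : ι) s)
        = fun s => ∏ p : ↥B, F (p : ι) s := funext fun s => tprod_fintype _
    rw [heq]
    exact DifferentiableOn.fun_finsetProd (f := fun (i : ↥B) => F (i : ι)) fun i _ => (hFd (i : ι)).differentiableOn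
  have h2 : DifferentiableOn ℂ (fun s => Complex.exp (L s)) V :=
    Complex.differentiable_exp.comp_differentiableOn hLd
  have hFdiff : DifferentiableOn ℂ (fun s => ∏' p : ι, F p s) V :=
    (h1.mul h2).congr hsplit
  exact hFdiff.analyticAt (hV.mem_nhds hs₀V)

/-- Given integers `a_p` with `|a_p| ≤ 2√p` and `C_p = p - a_p`, the Euler product
`∏_p (1 - a_p p^{-s}/(p² - C_p))` (over primes with `p² ≠ C_p`) converges absolutely for
`Re s > -1/2`; consequently the global Igusa zeta function, written as
`ζ(s+1)·∏_p (1 - a_p p^{-s}/(p²-C_p))`, is meromorphic on `Re s > -1/2`. -/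
theorem igusa_first_meromorphic_continuation
    (a : ℕ → ℤ) (ha : ∀ p : ℕ, p.Prime → |(a p : ℝ)| ≤ 2 * Real.sqrt p) :
    (∀ s : ℂ, -(1/2 : ℝ) < s.re →
      Summable (fun p : {p : ℕ // p.Prime ∧ ((p : ℤ) ^ 2 ≠ (p : ℤ) - a p)} =>
        ‖(a (p : ℕ) : ℂ) * ((p : ℕ) : ℂ) ^ (-s) /
            (((p : ℕ) : ℂ) ^ 2 - (((p : ℕ) : ℤ) - a (p : ℕ) : ℤ))‖)) ∧
    MeromorphicOn
      (fun s : ℂ => riemannZeta (s + 1) *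
        ∏' p : {p : ℕ // p.Prime ∧ ((p : ℤ) ^ 2 ≠ (p : ℤ) - a p)},
          (1 - (a (p : ℕ) : ℂ) * ((p : ℕ) : ℂ) ^ (-s) /
            (((p : ℕ) : ℂ) ^ 2 - (((p : ℕ) : ℤ) - a (p : ℕ) : ℤ))))
      {s : ℂ | -(1/2 : ℝ) < s.re} := by
  constructor
  · intro s hs
    exact Summable.of_nonneg_of_le (fun p => norm_nonneg _)
      (fun p => igusa_term_bound p.2.1 (ha _ p.2.1) p.2.2 (le_refl s.re))
      (igusa_majorant_summable a hs)
  · intro s₀ hs₀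
    exact (zeta_shift_meromorphicAt s₀).mul
      (igusa_prod_analyticAt a ha hs₀).meromorphicAt
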